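/- Under assumptions (A0)–(A4) and the reverse triangle inequality (R_ρ), for all t ∈ I and x ∈ Q(t), the element a_i + b_i decomposition of ∇_x g_i(t,x) onto the cone N_ρ(Q(t),x) and its polar satisfies α/γ ≤ |b_i| ≤ β, and moreover 2⟨b_i, -∇_x g_i(t,x)⟩ ≤ -α²/γ². -/
import Mathlib


open scoped RealInnerProductSpace

/-- The cone generated by the opposites of the active gradients. -/
def gradCone {d : ℕ} {ι : Type*} [Fintype ι] (G : ι → EuclideanSpace ℝ (Fin d)) :
    Set (EuclideanSpace ℝ (Fin d)) :=
  {v | ∃ lam : ι → ℝ, (∀ i, 0 ≤ lam i) ∧ v = -∑ i, lam i • G i}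

/-- The polar cone of a set. -/
def polarCone {d : ℕ} (K : Set (EuclideanSpace ℝ (Fin d))) :
    Set (EuclideanSpace ℝ (Fin d)) :=
  {w | ∀ v ∈ K, ⟪v, w⟫ ≤ 0}

/-- Under (A1) and the reverse triangle inequality (R_ρ), the Moreau decomposition
∇g_i = a_i + b_i onto N_ρ and its polar satisfies α/γ ≤ |b_i| ≤ β and
2⟨b_i, -∇g_i⟩ ≤ -α²/γ². -/
theorem moreau_decomposition_bounds {d : ℕ} {ι : Type*} [Fintype ι]
    (α β γ : ℝ) (hα : 0 < α) (hβ : 0 < β) (hγ : 0 < γ)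
    (G : ι → EuclideanSpace ℝ (Fin d))
    (hA1 : ∀ i, α ≤ ‖G i‖ ∧ ‖G i‖ ≤ β)
    (hR : ∀ lam : ι → ℝ, (∀ i, 0 ≤ lam i) →
      ∑ i, lam i * ‖G i‖ ≤ γ * ‖∑ i, lam i • G i‖)
    (a b : ι → EuclideanSpace ℝ (Fin d))
    (ha : ∀ i, a i ∈ gradCone G) (hb : ∀ i, b i ∈ polarCone (gradCone G))
    (hdecomp : ∀ i, G i = a i + b i) (horth : ∀ i, ⟪a i, b i⟫ = 0) :
    ∀ i, α / γ ≤ ‖b i‖ ∧ ‖b i‖ ≤ β ∧ 2 * ⟪b i, -(G i)⟫ ≤ -(α ^ 2 / γ ^ 2) := by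
  classical
  intro i
  obtain ⟨lam, hlam, halam⟩ := ha i
  set μ : ι → ℝ := fun j => lam j + if j = i then 1 else 0 with hμ
  have hμpos : ∀ j, 0 ≤ μ j := by
    intro j
    have := hlam j
    simp only [hμ]
    split <;> linarith
  have hbi : b i = ∑ j, μ j • G j := by
    have hba : b i = G i - a i := by rw [hdecomp i]; abel
    rw [hba, halam, sub_neg_eq_add]
    have : (∑ j, μ j • G j) =
        ∑ j, (lam j • G j + if j = i then G j else 0) := by
      refine Finset.sum_congr rfl fun j _ => ?_
      simp only [hμ, add_smul, ite_smul, one_smul, zero_smul]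
    rw [this, Finset.sum_add_distrib, Finset.sum_ite_eq' Finset.univ i (fun j => G j)]
    simp only [Finset.mem_univ, if_true]
    abel
  have hRμ := hR μ hμpos
  have hμi : (1:ℝ) ≤ μ i := by
    have := hlam i
    simp only [hμ, eq_self_iff_true, if_true]
    linarith
  have hsum_lb : α ≤ ∑ j, μ j * ‖G j‖ := by
    have h1 : μ i * ‖G i‖ ≤ ∑ j, μ j * ‖G j‖ := by
      apply Finset.single_le_sum (f := fun j => μ j * ‖G j‖)
      · exact fun j _ => mul_nonneg (hμpos j) (norm_nonneg _)
      · exact Finset.mem_univ i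
    nlinarith [(hA1 i).1, norm_nonneg (G i)]
  have hlb : α ≤ γ * ‖b i‖ := by rw [hbi]; linarith
  have hblb : α / γ ≤ ‖b i‖ := by
    rw [div_le_iff₀ hγ]
    nlinarith [norm_nonneg (b i)]
  refine ⟨hblb, ?_, ?_⟩
  · have hpyth : ‖G i‖ ^ 2 = ‖a i‖ ^ 2 + ‖b i‖ ^ 2 := by
      rw [hdecomp i, norm_add_sq_real, horth i]; ring
    nlinarith [(hA1 i).2, norm_nonneg (b i), norm_nonneg (G i), sq_nonneg ‖a i‖]
  · have h0 : ⟪b i, a i⟫ = (0:ℝ) := by rw [real_inner_comm]; exact horth i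
    have hbG : ⟪b i, G i⟫ = ‖b i‖ ^ 2 := by
      rw [hdecomp i, inner_add_right, h0, real_inner_self_eq_norm_sq]; ring
    rw [inner_neg_right, hbG]
    have hag : 0 ≤ α / γ := le_of_lt (div_pos hα hγ)
    have h1 : (α / γ) ^ 2 ≤ ‖b i‖ ^ 2 := pow_le_pow_left₀ hag hblb 2
    have h2 : (α / γ) ^ 2 = α ^ 2 / γ ^ 2 := div_pow α γ 2
    nlinarith [h1, h2]
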